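/- arXiv:1812.10787 — 2 statements merged into one kernel-verified Lean document; each statement's English description precedes it below -/
import Mathlib

section
/- Let S and Ω be Polish spaces, r a nonzero finite measure on Ω, γ : Ω × S^ℕ₊ → S measurable with γ[ω](x) depending only on the first κ(ω) coordinates, where κ : Ω → ℕ is measurable and ∫ κ(ω) r(dω) < ∞. Define T(μ) as the law of γ[ω](X_1, X_2, …) where ω has law |r|⁻¹ r and (X_i) are i.i.d. with law μ. Then ‖T(μ) - T(ν)‖ ≤ (|r|⁻¹ ∫ κ(ω) r(dω)) ‖μ - ν‖ for all probability measures μ, ν on S. -/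
open MeasureTheory

/-- The total variation distance `‖μ - ν‖ = sup_A |μ(A) - ν(A)|`. -/
noncomputable def tvDist {S : Type*} [MeasurableSpace S] (μ ν : Measure S) : ℝ :=
  sSup {c | ∃ A : Set S, MeasurableSet A ∧ c = |(μ A).toReal - (ν A).toReal|}

/-- The RDE operator: `rdeT r γ κ μ` is the law of `γ[ω](X_1, X_2, …)` where `ω`
has law `|r|⁻¹ r` and the `X_i` are i.i.d. with law `μ`; since `γ[ω]` depends only on
the first `κ(ω)` coordinates, it is built from the finite product measure
`μ^{⊗κ(ω)}`, extending by an arbitrary point in the remaining coordinates. -/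
noncomputable def rdeT {Ω S : Type*} [MeasurableSpace Ω] [MeasurableSpace S] [Nonempty S]
    (r : Measure Ω) (γ : Ω → (ℕ → S) → S) (κ : Ω → ℕ) (μ : Measure S) : Measure S :=
  ((r Set.univ)⁻¹ • r).bind fun ω =>
    Measure.map
      (fun v : Fin (κ ω) → S =>
        γ ω (fun i => if h : i < κ ω then v ⟨i, h⟩ else Classical.arbitrary S))
      (Measure.pi fun _ : Fin (κ ω) => μ)

section helpers
variable {S : Type*} [MeasurableSpace S]

lemma toReal_le_one (μ : Measure S) [IsProbabilityMeasure μ] (A : Set S) :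
    (μ A).toReal ≤ 1 := by
  have h : μ A ≤ 1 := prob_le_one
  exact ENNReal.toReal_le_of_le_ofReal zero_le_one (by simpa using h)

lemma tvDist_bdd (μ ν : Measure S) [IsProbabilityMeasure μ] [IsProbabilityMeasure ν] :
    BddAbove {c | ∃ A : Set S, MeasurableSet A ∧ c = |(μ A).toReal - (ν A).toReal|} := by
  refine ⟨2, ?_⟩
  rintro c ⟨A, hA, rfl⟩
  have h1 := toReal_le_one μ A
  have h2 := toReal_le_one ν A
  have h3 : (0:ℝ) ≤ (μ A).toReal := ENNReal.toReal_nonneg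
  have h4 : (0:ℝ) ≤ (ν A).toReal := ENNReal.toReal_nonneg
  rw [abs_le]; constructor <;> linarith

lemma le_tvDist (μ ν : Measure S) [IsProbabilityMeasure μ] [IsProbabilityMeasure ν]
    {A : Set S} (hA : MeasurableSet A) :
    |(μ A).toReal - (ν A).toReal| ≤ tvDist μ ν :=
  le_csSup (tvDist_bdd μ ν) ⟨A, hA, rfl⟩

lemma tvDist_nonneg (μ ν : Measure S) [IsProbabilityMeasure μ] [IsProbabilityMeasure ν] :
    0 ≤ tvDist μ ν :=
  le_trans (abs_nonneg _) (le_tvDist μ ν MeasurableSet.empty)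

lemma prod_diff_le {β : Type*} [MeasurableSpace β] (ρ : Measure β) [IsProbabilityMeasure ρ]
    (m₁ m₂ : Measure S) [IsProbabilityMeasure m₁] [IsProbabilityMeasure m₂] {c : ℝ}
    (h : ∀ C : Set S, MeasurableSet C → |(m₁ C).toReal - (m₂ C).toReal| ≤ c)
    {B : Set (β × S)} (hB : MeasurableSet B) :
    |((ρ.prod m₁) B).toReal - ((ρ.prod m₂) B).toReal| ≤ c := by
  have hm₁ : Measurable fun y => m₁ (Prod.mk y ⁻¹' B) := measurable_measure_prodMk_left hB
  have hm₂ : Measurable fun y => m₂ (Prod.mk y ⁻¹' B) := measurable_measure_prodMk_left hB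
  have ht₁ : ((ρ.prod m₁) B).toReal = ∫ y, (m₁ (Prod.mk y ⁻¹' B)).toReal ∂ρ := by
    rw [Measure.prod_apply hB,
      ← integral_toReal hm₁.aemeasurable (ae_of_all _ fun y => measure_lt_top _ _)]
  have ht₂ : ((ρ.prod m₂) B).toReal = ∫ y, (m₂ (Prod.mk y ⁻¹' B)).toReal ∂ρ := by
    rw [Measure.prod_apply hB,
      ← integral_toReal hm₂.aemeasurable (ae_of_all _ fun y => measure_lt_top _ _)]
  have hint : ∀ (m : Measure S), IsProbabilityMeasure m → Measurable (fun y => m (Prod.mk y ⁻¹' B)) →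
      Integrable (fun y => (m (Prod.mk y ⁻¹' B)).toReal) ρ := by
    intro m hm hmeas
    refine Integrable.mono' (integrable_const 1) hmeas.ennreal_toReal.aestronglyMeasurable ?_
    filter_upwards with y
    rw [Real.norm_eq_abs, abs_of_nonneg ENNReal.toReal_nonneg]
    exact toReal_le_one m _
  have hi₁ := hint m₁ inferInstance hm₁
  have hi₂ := hint m₂ inferInstance hm₂
  rw [ht₁, ht₂, ← integral_sub hi₁ hi₂]
  calc |∫ y, ((m₁ (Prod.mk y ⁻¹' B)).toReal - (m₂ (Prod.mk y ⁻¹' B)).toReal) ∂ρ|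
      ≤ ∫ y, |(m₁ (Prod.mk y ⁻¹' B)).toReal - (m₂ (Prod.mk y ⁻¹' B)).toReal| ∂ρ :=
        by simpa [Real.norm_eq_abs] using
          norm_integral_le_integral_norm (μ := ρ)
            (fun y => (m₁ (Prod.mk y ⁻¹' B)).toReal - (m₂ (Prod.mk y ⁻¹' B)).toReal)
    _ ≤ ∫ _y, c ∂ρ := by
        refine integral_mono (hi₁.sub hi₂).abs (integrable_const c) fun y => ?_
        exact h _ (measurable_prodMk_left hB)
    _ = c := by simp

lemma pi_diff_le (μ ν : Measure S) [IsProbabilityMeasure μ] [IsProbabilityMeasure ν] :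
    ∀ n : ℕ, ∀ B : Set (Fin n → S), MeasurableSet B →
      |((Measure.pi fun _ : Fin n => μ) B).toReal - ((Measure.pi fun _ : Fin n => ν) B).toReal|
        ≤ n * tvDist μ ν := by
  intro n
  induction n with
  | zero =>
      intro B hB
      rw [Measure.pi_of_empty, Measure.pi_of_empty]
      simp
  | succ n ih =>
      intro B hB
      set e := MeasurableEquiv.piFinSuccAbove (fun _ : Fin (n + 1) => S) 0 with he
      set C : Set (S × (Fin n → S)) := e.symm ⁻¹' B with hCdef
      have hC : MeasurableSet C := e.symm.measurable hB
      have hμeq : (Measure.pi fun _ : Fin (n+1) => μ) B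
          = (μ.prod (Measure.pi fun _ : Fin n => μ)) C :=
        (((measurePreserving_piFinSuccAbove (fun _ : Fin (n+1) => μ) 0).symm e).measure_preimage
          hB.nullMeasurableSet).symm
      have hνeq : (Measure.pi fun _ : Fin (n+1) => ν) B
          = (ν.prod (Measure.pi fun _ : Fin n => ν)) C :=
        (((measurePreserving_piFinSuccAbove (fun _ : Fin (n+1) => ν) 0).symm e).measure_preimage
          hB.nullMeasurableSet).symm
      have hswap : ∀ (θ : Measure S), IsProbabilityMeasure θ →
          (θ.prod (Measure.pi fun _ : Fin n => ν)) C
          = ((Measure.pi fun _ : Fin n => ν).prod θ) (Prod.swap ⁻¹' C) := by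
        intro θ _
        rw [← Measure.prod_swap, Measure.map_apply measurable_swap hC]
      set t := tvDist μ ν with htdef
      have h1 : |((μ.prod (Measure.pi fun _ : Fin n => μ)) C).toReal
          - ((μ.prod (Measure.pi fun _ : Fin n => ν)) C).toReal| ≤ n * t :=
        prod_diff_le μ _ _ (fun D hD => ih D hD) hC
      have h2 : |((μ.prod (Measure.pi fun _ : Fin n => ν)) C).toReal
          - ((ν.prod (Measure.pi fun _ : Fin n => ν)) C).toReal| ≤ t := by
        rw [hswap μ inferInstance, hswap ν inferInstance]
        exact prod_diff_le _ μ ν (fun D hD => le_tvDist μ ν hD)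
          (measurable_swap (hC : MeasurableSet C))
      rw [hμeq, hνeq]
      have := abs_sub_abs_le_abs_sub ((μ.prod (Measure.pi fun _ : Fin n => μ)) C).toReal
      calc |((μ.prod (Measure.pi fun _ : Fin n => μ)) C).toReal
          - ((ν.prod (Measure.pi fun _ : Fin n => ν)) C).toReal|
          ≤ |((μ.prod (Measure.pi fun _ : Fin n => μ)) C).toReal
            - ((μ.prod (Measure.pi fun _ : Fin n => ν)) C).toReal|
          + |((μ.prod (Measure.pi fun _ : Fin n => ν)) C).toReal
            - ((ν.prod (Measure.pi fun _ : Fin n => ν)) C).toReal| := abs_sub_le _ _ _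
        _ ≤ n * t + t := add_le_add h1 h2
        _ = (n + 1 : ℕ) * t := by push_cast; ring

lemma ext_measurable [Nonempty S] (n : ℕ) :
    Measurable fun v : Fin n → S =>
      (fun i => if h : i < n then v ⟨i, h⟩ else Classical.arbitrary S : ℕ → S) := by
  apply measurable_pi_lambda
  intro i
  by_cases h : i < n
  · simp only [h, dif_pos]
    exact measurable_pi_apply _
  · simp only [h, dif_neg, not_false_iff]
    exact measurable_const

lemma kernel_apply_measurable {Ω : Type*} [MeasurableSpace Ω]
    [Nonempty S] (γ : Ω → (ℕ → S) → S) (hγ : Measurable (Function.uncurry γ))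
    (κ : Ω → ℕ) (hκ : Measurable κ) (θ : Measure S) [IsProbabilityMeasure θ]
    {A : Set S} (hA : MeasurableSet A) :
    Measurable fun ω => (Measure.pi fun _ : Fin (κ ω) => θ)
      ((fun v : Fin (κ ω) → S =>
        γ ω (fun i => if h : i < κ ω then v ⟨i, h⟩ else Classical.arbitrary S)) ⁻¹' A) := by
  have key : Measurable fun p : Ω × ℕ => (Measure.pi fun _ : Fin p.2 => θ)
      ((fun v : Fin p.2 → S =>
        γ p.1 (fun i => if h : i < p.2 then v ⟨i, h⟩ else Classical.arbitrary S)) ⁻¹' A) := by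
    apply measurable_from_prod_countable_left
    intro n
    have hBn : MeasurableSet ((fun p : Ω × (Fin n → S) =>
        γ p.1 (fun i => if h : i < n then p.2 ⟨i, h⟩ else Classical.arbitrary S)) ⁻¹' A) := by
      exact (hγ.comp (measurable_fst.prodMk ((ext_measurable n).comp measurable_snd))) hA
    have := measurable_measure_prodMk_left (ν := Measure.pi fun _ : Fin n => θ) hBn
    exact this
  exact key.comp (measurable_id.prodMk hκ)

end helpers


/-- Lipschitz bound for the RDE operator: if `r` is a nonzero finite measure, `γ[ω]`
depends only on the first `κ(ω)` coordinates, and `∫ κ dr < ∞`, then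
`‖T(μ) - T(ν)‖ ≤ (|r|⁻¹ ∫ κ dr) ‖μ - ν‖` for probability measures `μ, ν`. -/
theorem stmt4 {Ω S : Type*} [MeasurableSpace Ω] [MeasurableSpace S] [Nonempty S]
    (r : Measure Ω) [IsFiniteMeasure r] (hr : r Set.univ ≠ 0)
    (γ : Ω → (ℕ → S) → S) (hγ : Measurable (Function.uncurry γ))
    (κ : Ω → ℕ) (hκ : Measurable κ)
    (hdep : ∀ ω, ∀ x y : ℕ → S, (∀ i < κ ω, x i = y i) → γ ω x = γ ω y)
    (hmom : Integrable (fun ω => (κ ω : ℝ)) r)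
    (μ ν : Measure S) [IsProbabilityMeasure μ] [IsProbabilityMeasure ν] :
    tvDist (rdeT r γ κ μ) (rdeT r γ κ ν)
      ≤ ((r Set.univ).toReal⁻¹ * ∫ ω, (κ ω : ℝ) ∂r) * tvDist μ ν := by
  classical
  set r' : Measure Ω := (r Set.univ)⁻¹ • r with hr'def
  haveI hr'prob : IsProbabilityMeasure r' := ⟨by
    rw [hr'def, Measure.smul_apply, smul_eq_mul,
      ENNReal.inv_mul_cancel hr (measure_ne_top r _)]⟩
  set t := tvDist μ ν with htdef
  have htnn : 0 ≤ t := tvDist_nonneg μ ν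
  -- the per-ω maps
  set f : ∀ ω, (Fin (κ ω) → S) → S := fun ω v =>
    γ ω (fun i => if h : i < κ ω then v ⟨i, h⟩ else Classical.arbitrary S) with hfdef
  have hfω : ∀ ω, Measurable (f ω) := fun ω => by
    have h1 : Measurable (γ ω) :=
      hγ.comp (measurable_const.prodMk measurable_id)
    exact h1.comp (ext_measurable (κ ω))
  -- the kernels
  set K : Measure S → Ω → Measure S := fun θ ω =>
    Measure.map (f ω) (Measure.pi fun _ : Fin (κ ω) => θ) with hKdef
  have hKapp : ∀ (θ : Measure S), ∀ ω, ∀ {A : Set S}, MeasurableSet A → IsProbabilityMeasure θ →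
      K θ ω A = (Measure.pi fun _ : Fin (κ ω) => θ) (f ω ⁻¹' A) := by
    intro θ ω A hA _
    exact Measure.map_apply (hfω ω) hA
  have hKAmeas : ∀ (θ : Measure S), IsProbabilityMeasure θ → ∀ {A : Set S}, MeasurableSet A →
      Measurable fun ω => K θ ω A := by
    intro θ hθ A hA
    have heq : (fun ω => K θ ω A)
        = fun ω => (Measure.pi fun _ : Fin (κ ω) => θ) (f ω ⁻¹' A) :=
      funext fun ω => hKapp θ ω hA hθ
    rw [heq]
    exact kernel_apply_measurable γ hγ κ hκ θ hA
  have hKmeas : ∀ (θ : Measure S), IsProbabilityMeasure θ → Measurable (K θ) := by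
    intro θ hθ
    exact Measure.measurable_of_measurable_coe _ fun A hA => hKAmeas θ hθ hA
  have hKprob : ∀ (θ : Measure S), IsProbabilityMeasure θ → ∀ ω,
      IsProbabilityMeasure (K θ ω) := by
    intro θ hθ ω
    exact Measure.isProbabilityMeasure_map (hfω ω).aemeasurable
  -- T applied to a set
  have hT : ∀ (θ : Measure S), IsProbabilityMeasure θ → ∀ {A : Set S}, MeasurableSet A →
      ((rdeT r γ κ θ) A).toReal = ∫ ω, (K θ ω A).toReal ∂r' := by
    intro θ hθ A hA
    have hb : (rdeT r γ κ θ) A = ∫⁻ ω, K θ ω A ∂r' :=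
      Measure.bind_apply hA (hKmeas θ hθ).aemeasurable
    rw [hb, ← integral_toReal (hKAmeas θ hθ hA).aemeasurable
      (ae_of_all _ fun ω => by
        haveI := hKprob θ hθ ω
        exact measure_lt_top _ A)]
  -- integrability
  have hintK : ∀ (θ : Measure S), IsProbabilityMeasure θ → ∀ {A : Set S}, MeasurableSet A →
      Integrable (fun ω => (K θ ω A).toReal) r' := by
    intro θ hθ A hA
    refine Integrable.mono' (integrable_const 1)
      ((hKAmeas θ hθ hA).ennreal_toReal.aestronglyMeasurable) ?_
    filter_upwards with ω
    rw [Real.norm_eq_abs, abs_of_nonneg ENNReal.toReal_nonneg]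
    haveI := hKprob θ hθ ω
    exact toReal_le_one (K θ ω) A
  have hκint : Integrable (fun ω => (κ ω : ℝ) * t) r' :=
    (hmom.smul_measure (ENNReal.inv_ne_top.2 hr)).mul_const t
  -- value of the dominating integral
  have hdom : ∫ ω, (κ ω : ℝ) * t ∂r'
      = ((r Set.univ).toReal⁻¹ * ∫ ω, (κ ω : ℝ) ∂r) * t := by
    rw [hr'def, integral_smul_measure, integral_mul_const, ENNReal.toReal_inv]
    rw [smul_eq_mul, mul_assoc]
  -- main bound per set
  refine csSup_le ⟨0, ∅, MeasurableSet.empty, by simp⟩ ?_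
  rintro b ⟨A, hA, rfl⟩
  rw [hT μ inferInstance hA, hT ν inferInstance hA,
    ← integral_sub (hintK μ inferInstance hA) (hintK ν inferInstance hA)]
  calc |∫ ω, ((K μ ω A).toReal - (K ν ω A).toReal) ∂r'|
      ≤ ∫ ω, |(K μ ω A).toReal - (K ν ω A).toReal| ∂r' := by
        simpa [Real.norm_eq_abs] using norm_integral_le_integral_norm (μ := r')
          (fun ω => (K μ ω A).toReal - (K ν ω A).toReal)
    _ ≤ ∫ ω, (κ ω : ℝ) * t ∂r' := by
        refine integral_mono
          (((hintK μ inferInstance hA).sub (hintK ν inferInstance hA)).abs) hκint fun ω => ?_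
        rw [hKapp μ ω hA inferInstance, hKapp ν ω hA inferInstance]
        exact pi_diff_le μ ν (κ ω) (f ω ⁻¹' A) ((hfω ω) hA)
    _ = ((r Set.univ).toReal⁻¹ * ∫ ω, (κ ω : ℝ) ∂r) * t := hdom
end

section
/- The semigroup (T_t) of the mean-field equation is a contraction in total variation with rate K: ‖T_t(μ) - T_t(ν)‖ ≤ e^{Kt} ‖μ - ν‖ for all probability measures μ, ν on S and t ≥ 0, where K = ∫ r(dω)(κ(ω) - 1). In particular if ∫ r(dω)(κ(ω)-1) < 0 the operators form a strict contraction semigroup. -/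
open MeasureTheory

/-- A family `(μ_t)_{t ≥ 0}` of probability measures solves the mean-field equation
`dμ_t/dt = |r| (T(μ_t) - μ_t)`, interpreted weakly against bounded measurable functions. -/
def SolvesMeanField {Ω S : Type*} [MeasurableSpace Ω] [MeasurableSpace S] [Nonempty S]
    (r : Measure Ω) (γ : Ω → (ℕ → S) → S) (κ : Ω → ℕ) (μ : ℝ → Measure S) : Prop :=
  (∀ t : ℝ, 0 ≤ t → IsProbabilityMeasure (μ t)) ∧
  ∀ φ : S → ℝ, Measurable φ → (∃ C, ∀ x, |φ x| ≤ C) →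
    ∀ t : ℝ, 0 ≤ t →
      HasDerivAt (fun s => ∫ x, φ x ∂(μ s))
        ((r Set.univ).toReal *
          ((∫ x, φ x ∂(rdeT r γ κ (μ t))) - ∫ x, φ x ∂(μ t))) t

open Set
open scoped ENNReal NNReal

section TV
variable {S : Type*} [MeasurableSpace S] (p q : Measure S)
  [IsProbabilityMeasure p] [IsProbabilityMeasure q]

lemma tvSet_nonempty : {c | ∃ A : Set S, MeasurableSet A ∧ c = |(p A).toReal - (q A).toReal|}.Nonempty :=
  ⟨_, ∅, MeasurableSet.empty, rfl⟩

lemma tvSet_bdd : BddAbove {c | ∃ A : Set S, MeasurableSet A ∧ c = |(p A).toReal - (q A).toReal|} := by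
  refine ⟨1, ?_⟩
  rintro c ⟨A, hA, rfl⟩
  have h1 : (p A).toReal ≤ 1 := by
    simpa using ENNReal.toReal_mono (by simp) (prob_le_one (μ := p) (s := A))
  have h2 : (q A).toReal ≤ 1 := by
    simpa using ENNReal.toReal_mono (by simp) (prob_le_one (μ := q) (s := A))
  have h3 : 0 ≤ (p A).toReal := ENNReal.toReal_nonneg
  have h4 : 0 ≤ (q A).toReal := ENNReal.toReal_nonneg
  rw [abs_sub_le_iff]; constructor <;> linarith

lemma abs_le_tvDist {A : Set S} (hA : MeasurableSet A) :
    |(p A).toReal - (q A).toReal| ≤ tvDist p q :=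
  le_csSup (tvSet_bdd p q) ⟨A, hA, rfl⟩

lemma tvDist_nonneg_s6 : 0 ≤ tvDist p q := by
  have := abs_le_tvDist p q MeasurableSet.empty
  simpa using this

lemma tvDist_comm : tvDist p q = tvDist q p := by
  unfold tvDist
  congr 1
  ext c
  constructor <;> rintro ⟨A, hA, rfl⟩ <;> exact ⟨A, hA, (abs_sub_comm _ _)⟩

lemma measure_le_add_tvDist {A : Set S} (hA : MeasurableSet A) :
    p A ≤ q A + ENNReal.ofReal (tvDist p q) := by
  have h := abs_le_tvDist p q hA
  have h1 : (p A).toReal ≤ (q A).toReal + tvDist p q := by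
    have := abs_sub_le_iff.mp h
    linarith [this.1]
  calc p A = ENNReal.ofReal ((p A).toReal) := (ENNReal.ofReal_toReal (measure_ne_top p A)).symm
    _ ≤ ENNReal.ofReal ((q A).toReal + tvDist p q) := ENNReal.ofReal_le_ofReal h1
    _ ≤ q A + ENNReal.ofReal (tvDist p q) := by
        rw [ENNReal.ofReal_add ENNReal.toReal_nonneg (tvDist_nonneg_s6 p q),
          ENNReal.ofReal_toReal (measure_ne_top q A)]

lemma lintegral_le_add_tvDist {f : S → ℝ≥0∞} (hf : Measurable f) (hf1 : ∀ x, f x ≤ 1) :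
    ∫⁻ x, f x ∂p ≤ (∫⁻ x, f x ∂q) + ENNReal.ofReal (tvDist p q) := by
  set g : S → ℝ := fun x => (f x).toReal with hg
  have hgm : Measurable g := hf.ennreal_toReal
  have hfg : ∀ x, ENNReal.ofReal (g x) = f x := fun x =>
    ENNReal.ofReal_toReal (lt_of_le_of_lt (hf1 x) ENNReal.one_lt_top).ne
  have hg1 : ∀ x, g x ≤ 1 := fun x => by
    simpa using ENNReal.toReal_mono (by simp) (hf1 x)
  have hp : ∫⁻ x, f x ∂p = ∫⁻ t in Ioi (0:ℝ), p {a | t < g a} := by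
    rw [← lintegral_eq_lintegral_meas_lt p (Filter.Eventually.of_forall fun x => ENNReal.toReal_nonneg) hgm.aemeasurable]
    exact (lintegral_congr fun x => hfg x).symm
  have hq : ∫⁻ x, f x ∂q = ∫⁻ t in Ioi (0:ℝ), q {a | t < g a} := by
    rw [← lintegral_eq_lintegral_meas_lt q (Filter.Eventually.of_forall fun x => ENNReal.toReal_nonneg) hgm.aemeasurable]
    exact (lintegral_congr fun x => hfg x).symm
  rw [hp, hq]
  have key : ∀ t ∈ Ioi (0:ℝ), p {a | t < g a} ≤ q {a | t < g a}
      + (Set.Ioc (0:ℝ) 1).indicator (fun _ => ENNReal.ofReal (tvDist p q)) t := by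
    intro t ht
    by_cases h1 : t ≤ 1
    · have : (Set.Ioc (0:ℝ) 1).indicator (fun _ => ENNReal.ofReal (tvDist p q)) t
          = ENNReal.ofReal (tvDist p q) := Set.indicator_of_mem (Set.mem_Ioc.mpr ⟨ht, h1⟩) _
      rw [this]
      exact measure_le_add_tvDist p q (measurableSet_lt measurable_const hgm)
    · have he : {a | t < g a} = ∅ := by
        ext a; simp only [Set.mem_setOf_eq, Set.mem_empty_iff_false, iff_false, not_lt]
        linarith [hg1 a]
      simp [he]
  calc ∫⁻ t in Ioi (0:ℝ), p {a | t < g a}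
      ≤ ∫⁻ t in Ioi (0:ℝ), (q {a | t < g a}
        + (Set.Ioc (0:ℝ) 1).indicator (fun _ => ENNReal.ofReal (tvDist p q)) t) := by
        have hqm : Measurable fun t : ℝ => q {a | t < g a} := by
          have he : ∀ t : ℝ, {a | t < g a} = Prod.mk t ⁻¹' {x : ℝ × S | x.1 < g x.2} :=
            fun t => rfl
          simp_rw [he]
          exact measurable_measure_prodMk_left
            (measurableSet_lt measurable_fst (hgm.comp measurable_snd))
        exact setLIntegral_mono_ae
          ((hqm.add (measurable_const.indicator measurableSet_Ioc)).aemeasurable)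
          (Filter.Eventually.of_forall key)
    _ = (∫⁻ t in Ioi (0:ℝ), q {a | t < g a})
        + ∫⁻ t in Ioi (0:ℝ), (Set.Ioc (0:ℝ) 1).indicator (fun _ => ENNReal.ofReal (tvDist p q)) t := by
        rw [lintegral_add_right]
        exact (measurable_const.indicator measurableSet_Ioc)
    _ ≤ (∫⁻ t in Ioi (0:ℝ), q {a | t < g a}) + ENNReal.ofReal (tvDist p q) := by
        gcongr
        rw [lintegral_indicator measurableSet_Ioc, Measure.restrict_restrict measurableSet_Ioc]
        have : Set.Ioc (0:ℝ) 1 ∩ Ioi 0 = Set.Ioc 0 1 := by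
          ext x; simp only [Set.mem_inter_iff, Set.mem_Ioc, Set.mem_Ioi, and_iff_left_iff_imp]
          exact fun h => h.1
        simp [this]

end TV

section Pi
variable {S : Type*} [MeasurableSpace S]

lemma pi_le_add_tvDist (p q : Measure S) [IsProbabilityMeasure p] [IsProbabilityMeasure q] :
    ∀ (n : ℕ) {B : Set (Fin n → S)}, MeasurableSet B →
      (Measure.pi fun _ : Fin n => p) B
        ≤ (Measure.pi fun _ : Fin n => q) B + ENNReal.ofReal (n * tvDist p q) := by
  intro n
  induction n with
  | zero =>
      intro B hB
      rw [Measure.pi_of_empty (fun _ : Fin 0 => p), Measure.pi_of_empty (fun _ : Fin 0 => q)]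
      exact le_add_right le_rfl
  | succ n ih =>
      intro B hB
      set e := MeasurableEquiv.piFinSuccAbove (fun _ : Fin (n + 1) => S) 0 with he
      set B' : Set (S × (Fin n → S)) := e.symm ⁻¹' B with hB'def
      have hB' : MeasurableSet B' := e.symm.measurable hB
      have hrw : ∀ (m : Measure S), IsProbabilityMeasure m →
          (Measure.pi fun _ : Fin (n + 1) => m) B
            = ∫⁻ x, (Measure.pi fun _ : Fin n => m) (Prod.mk x ⁻¹' B') ∂m := by
        intro m hm
        have h := (measurePreserving_piFinSuccAbove (fun _ : Fin (n + 1) => m) 0).map_eq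
        have h1 : (Measure.pi fun _ : Fin (n + 1) => m) B
            = (Measure.map e (Measure.pi fun _ : Fin (n + 1) => m)) B' := by
          rw [e.map_apply]
          congr 1
          ext x
          simp [hB'def]
        rw [h1, h, Measure.prod_apply hB']
      rw [hrw p inferInstance, hrw q inferInstance]
      have hsec : ∀ x : S, MeasurableSet (Prod.mk x ⁻¹' B') := fun x =>
        measurable_prodMk_left hB'
      have step1 : ∫⁻ x, (Measure.pi fun _ : Fin n => p) (Prod.mk x ⁻¹' B') ∂p
          ≤ (∫⁻ x, (Measure.pi fun _ : Fin n => q) (Prod.mk x ⁻¹' B') ∂p)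
            + ENNReal.ofReal (n * tvDist p q) := by
        calc ∫⁻ x, (Measure.pi fun _ : Fin n => p) (Prod.mk x ⁻¹' B') ∂p
            ≤ ∫⁻ x, ((Measure.pi fun _ : Fin n => q) (Prod.mk x ⁻¹' B')
                + ENNReal.ofReal (n * tvDist p q)) ∂p :=
              lintegral_mono fun x => ih (hsec x)
          _ = _ := by
              rw [lintegral_add_right _ measurable_const, lintegral_const, measure_univ, mul_one]
      have hfm : Measurable fun x : S => (Measure.pi fun _ : Fin n => q) (Prod.mk x ⁻¹' B') :=
        measurable_measure_prodMk_left hB'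
      have hf1 : ∀ x : S, (Measure.pi fun _ : Fin n => q) (Prod.mk x ⁻¹' B') ≤ 1 :=
        fun x => prob_le_one
      have step2 := lintegral_le_add_tvDist p q hfm hf1
      calc ∫⁻ x, (Measure.pi fun _ : Fin n => p) (Prod.mk x ⁻¹' B') ∂p
          ≤ (∫⁻ x, (Measure.pi fun _ : Fin n => q) (Prod.mk x ⁻¹' B') ∂p)
            + ENNReal.ofReal (n * tvDist p q) := step1
        _ ≤ (∫⁻ x, (Measure.pi fun _ : Fin n => q) (Prod.mk x ⁻¹' B') ∂q)
            + ENNReal.ofReal (tvDist p q) + ENNReal.ofReal (n * tvDist p q) := by gcongr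
        _ = (∫⁻ x, (Measure.pi fun _ : Fin n => q) (Prod.mk x ⁻¹' B') ∂q)
            + ENNReal.ofReal ((n + 1 : ℕ) * tvDist p q) := by
            rw [add_assoc, ← ENNReal.ofReal_add (tvDist_nonneg_s6 p q)
              (by have := tvDist_nonneg_s6 p q; positivity)]
            congr 2
            push_cast
            ring

end Pi

section RDE
variable {Ω S : Type*} [MeasurableSpace Ω] [MeasurableSpace S] [Nonempty S]

/-- extension of a finite vector to `ℕ → S` -/
noncomputable def extFn (n : ℕ) (v : Fin n → S) : ℕ → S :=
  fun i => if h : i < n then v ⟨i, h⟩ else Classical.arbitrary S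

lemma measurable_extFn (n : ℕ) : Measurable (extFn (S := S) n) := by
  apply measurable_pi_lambda
  intro i
  by_cases h : i < n
  · simp only [extFn, dif_pos h]
    exact measurable_pi_apply _
  · simp only [extFn, dif_neg h]
    exact measurable_const

variable {γ : Ω → (ℕ → S) → S} (hγ : Measurable (Function.uncurry γ))
include hγ

lemma measurable_gammaExt_uncurry (n : ℕ) :
    Measurable (fun x : Ω × (Fin n → S) => γ x.1 (extFn n x.2)) :=
  hγ.comp (measurable_fst.prodMk ((measurable_extFn n).comp measurable_snd))

lemma measurable_gammaExt (n : ℕ) (ω : Ω) :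
    Measurable (fun v : Fin n → S => γ ω (extFn n v)) :=
  (measurable_gammaExt_uncurry hγ n).comp (measurable_const.prodMk measurable_id)

lemma measurable_piMeasApply (p : Measure S) [IsProbabilityMeasure p]
    (n : ℕ) {s : Set S} (hs : MeasurableSet s) :
    Measurable fun ω : Ω => (Measure.pi fun _ : Fin n => p) ((fun v => γ ω (extFn n v)) ⁻¹' s) := by
  have heq : ∀ ω : Ω, (Measure.pi fun _ : Fin n => p) ((fun v => γ ω (extFn n v)) ⁻¹' s)
      = ∫⁻ v, s.indicator (fun _ => (1 : ℝ≥0∞)) (γ ω (extFn n v))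
          ∂(Measure.pi fun _ : Fin n => p) := by
    intro ω
    rw [← lintegral_indicator_one ((measurable_gammaExt hγ n ω) hs)]
    refine lintegral_congr fun v => ?_
    by_cases hv : γ ω (extFn n v) ∈ s <;> simp [Set.indicator, hv]
  simp_rw [heq]
  exact Measurable.lintegral_prod_right'
    ((measurable_const.indicator hs).comp (measurable_gammaExt_uncurry hγ n))

variable {κ : Ω → ℕ} (hκ : Measurable κ)
include hκ

lemma measurable_rdeKernel (p : Measure S) [IsProbabilityMeasure p] :
    Measurable fun ω : Ω =>
      Measure.map
        (fun v : Fin (κ ω) → S =>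
          γ ω (fun i => if h : i < κ ω then v ⟨i, h⟩ else Classical.arbitrary S))
        (Measure.pi fun _ : Fin (κ ω) => p) := by
  apply Measure.measurable_of_measurable_coe
  intro s hs
  have heq : (fun ω : Ω =>
      Measure.map
        (fun v : Fin (κ ω) → S =>
          γ ω (fun i => if h : i < κ ω then v ⟨i, h⟩ else Classical.arbitrary S))
        (Measure.pi fun _ : Fin (κ ω) => p) s)
      = fun ω : Ω => (Measure.pi fun _ : Fin (κ ω) => p)
          ((fun v => γ ω (extFn (κ ω) v)) ⁻¹' s) := by
    funext ω
    exact Measure.map_apply (measurable_gammaExt hγ (κ ω) ω) hs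
  rw [heq]
  have hprod : Measurable fun x : Ω × ℕ =>
      (Measure.pi fun _ : Fin x.2 => p) ((fun v => γ x.1 (extFn x.2 v)) ⁻¹' s) :=
    measurable_from_prod_countable_left fun n => measurable_piMeasApply hγ p n hs
  exact hprod.comp (measurable_id.prodMk hκ)

variable (r : Measure Ω) [IsFiniteMeasure r]

lemma rdeT_apply (p : Measure S) [IsProbabilityMeasure p] {A : Set S} (hA : MeasurableSet A) :
    rdeT r γ κ p A
      = ∫⁻ ω, (Measure.pi fun _ : Fin (κ ω) => p) ((fun v => γ ω (extFn (κ ω) v)) ⁻¹' A)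
          ∂((r Set.univ)⁻¹ • r) := by
  rw [rdeT, Measure.bind_apply hA (measurable_rdeKernel hγ hκ p).aemeasurable]
  congr 1
  funext ω
  exact Measure.map_apply (measurable_gammaExt hγ (κ ω) ω) hA

lemma rdeT_le_one (hr : r Set.univ ≠ 0) (p : Measure S) [IsProbabilityMeasure p]
    {A : Set S} (hA : MeasurableSet A) : rdeT r γ κ p A ≤ 1 := by
  rw [rdeT_apply hγ hκ r p hA]
  calc ∫⁻ ω, (Measure.pi fun _ : Fin (κ ω) => p) ((fun v => γ ω (extFn (κ ω) v)) ⁻¹' A)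
        ∂((r Set.univ)⁻¹ • r)
      ≤ ∫⁻ _, 1 ∂((r Set.univ)⁻¹ • r) := lintegral_mono fun ω => prob_le_one
    _ = 1 := by
        rw [lintegral_one, Measure.smul_apply, smul_eq_mul]
        exact ENNReal.inv_mul_cancel hr (measure_ne_top r _)

lemma rdeT_le_add_tvDist (hr : r Set.univ ≠ 0)
    (hmom : Integrable (fun ω => (κ ω : ℝ)) r)
    (p q : Measure S) [IsProbabilityMeasure p] [IsProbabilityMeasure q]
    {A : Set S} (hA : MeasurableSet A) :
    rdeT r γ κ p A ≤ rdeT r γ κ q A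
      + ENNReal.ofReal ((∫ ω, (κ ω : ℝ) ∂((r Set.univ)⁻¹ • r)) * tvDist p q) := by
  rw [rdeT_apply hγ hκ r p hA, rdeT_apply hγ hκ r q hA]
  have hAsec : ∀ ω : Ω, MeasurableSet ((fun v => γ ω (extFn (κ ω) v)) ⁻¹' A) :=
    fun ω => (measurable_gammaExt hγ (κ ω) ω) hA
  have hpt : ∀ ω : Ω,
      (Measure.pi fun _ : Fin (κ ω) => p) ((fun v => γ ω (extFn (κ ω) v)) ⁻¹' A)
        ≤ (Measure.pi fun _ : Fin (κ ω) => q) ((fun v => γ ω (extFn (κ ω) v)) ⁻¹' A)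
          + ENNReal.ofReal ((κ ω : ℝ) * tvDist p q) :=
    fun ω => pi_le_add_tvDist p q (κ ω) (hAsec ω)
  have hmom' : Integrable (fun ω => (κ ω : ℝ) * tvDist p q) ((r Set.univ)⁻¹ • r) := by
    apply Integrable.mul_const
    exact hmom.smul_measure (ENNReal.inv_ne_top.mpr hr)
  have hlin : ∫⁻ ω, ENNReal.ofReal ((κ ω : ℝ) * tvDist p q) ∂((r Set.univ)⁻¹ • r)
      = ENNReal.ofReal ((∫ ω, (κ ω : ℝ) ∂((r Set.univ)⁻¹ • r)) * tvDist p q) := by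
    rw [← ofReal_integral_eq_lintegral_ofReal hmom'
      (Filter.Eventually.of_forall fun ω => by have := tvDist_nonneg_s6 p q; positivity)]
    rw [integral_mul_const]
  calc ∫⁻ ω, (Measure.pi fun _ : Fin (κ ω) => p) ((fun v => γ ω (extFn (κ ω) v)) ⁻¹' A)
        ∂((r Set.univ)⁻¹ • r)
      ≤ ∫⁻ ω, ((Measure.pi fun _ : Fin (κ ω) => q) ((fun v => γ ω (extFn (κ ω) v)) ⁻¹' A)
          + ENNReal.ofReal ((κ ω : ℝ) * tvDist p q)) ∂((r Set.univ)⁻¹ • r) :=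
        lintegral_mono hpt
    _ = _ := by
        rw [lintegral_add_right' _ ?_, hlin]
        exact (ENNReal.measurable_ofReal.comp
          ((measurable_from_nat.comp hκ : Measurable fun ω => ((κ ω : ℕ) : ℝ)).mul_const
            _)).aemeasurable

end RDE

section RDE2
variable {Ω S : Type*} [MeasurableSpace Ω] [MeasurableSpace S] [Nonempty S]
  {γ : Ω → (ℕ → S) → S} (hγ : Measurable (Function.uncurry γ))
  {κ : Ω → ℕ} (hκ : Measurable κ)
  (r : Measure Ω) [IsFiniteMeasure r]
include hγ hκ

lemma rdeT_toReal_le (hr : r Set.univ ≠ 0)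
    (hmom : Integrable (fun ω => (κ ω : ℝ)) r)
    (p q : Measure S) [IsProbabilityMeasure p] [IsProbabilityMeasure q]
    {A : Set S} (hA : MeasurableSet A) :
    (rdeT r γ κ p A).toReal ≤ (rdeT r γ κ q A).toReal
      + (∫ ω, (κ ω : ℝ) ∂((r Set.univ)⁻¹ • r)) * tvDist p q := by
  have h := rdeT_le_add_tvDist hγ hκ r hr hmom p q hA
  have h2 : rdeT r γ κ q A ≤ 1 := rdeT_le_one hγ hκ r hr q hA
  have hnn : 0 ≤ (∫ ω, (κ ω : ℝ) ∂((r Set.univ)⁻¹ • r)) * tvDist p q :=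
    mul_nonneg (integral_nonneg fun ω => Nat.cast_nonneg _) (tvDist_nonneg_s6 p q)
  have hfin : rdeT r γ κ q A
      + ENNReal.ofReal ((∫ ω, (κ ω : ℝ) ∂((r Set.univ)⁻¹ • r)) * tvDist p q) ≠ ⊤ :=
    ENNReal.add_ne_top.mpr ⟨(lt_of_le_of_lt h2 ENNReal.one_lt_top).ne, ENNReal.ofReal_ne_top⟩
  have := ENNReal.toReal_mono hfin h
  rwa [ENNReal.toReal_add (lt_of_le_of_lt h2 ENNReal.one_lt_top).ne ENNReal.ofReal_ne_top,
    ENNReal.toReal_ofReal hnn] at this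

lemma rdeT_toReal_le_one (hr : r Set.univ ≠ 0) (p : Measure S) [IsProbabilityMeasure p]
    {A : Set S} (hA : MeasurableSet A) : (rdeT r γ κ p A).toReal ≤ 1 := by
  have := rdeT_le_one hγ hκ r hr p hA
  simpa using ENNReal.toReal_mono (by simp) this

end RDE2


/-- Contraction property of the mean-field semigroup: solutions `T_t(μ) = μ_t` of the
mean-field equation satisfy `‖T_t(μ) - T_t(ν)‖ ≤ e^{Kt} ‖μ - ν‖` with
`K = ∫ (κ(ω) - 1) r(dω)`; in particular for `K < 0` the semigroup is a strict
contraction in total variation. -/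
theorem stmt6 {Ω S : Type*} [MeasurableSpace Ω] [MeasurableSpace S] [Nonempty S]
    (r : Measure Ω) [IsFiniteMeasure r] (hr : r Set.univ ≠ 0)
    (γ : Ω → (ℕ → S) → S) (hγ : Measurable (Function.uncurry γ))
    (κ : Ω → ℕ) (hκ : Measurable κ)
    (hdep : ∀ ω, ∀ x y : ℕ → S, (∀ i < κ ω, x i = y i) → γ ω x = γ ω y)
    (hmom : Integrable (fun ω => (κ ω : ℝ)) r)
    (μ ν : ℝ → Measure S)
    (hμ : SolvesMeanField r γ κ μ) (hν : SolvesMeanField r γ κ ν) :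
    ∀ t : ℝ, 0 ≤ t →
      tvDist (μ t) (ν t) ≤
        Real.exp ((∫ ω, ((κ ω : ℝ) - 1) ∂r) * t) * tvDist (μ 0) (ν 0) := by
  
  intro t ht
  classical
  obtain ⟨hμP, hμD⟩ := hμ
  obtain ⟨hνP, hνD⟩ := hν
  set c : ℝ := (r Set.univ).toReal with hc
  have hc0 : 0 < c := ENNReal.toReal_pos hr (measure_ne_top r _)
  set Ch : ℝ := ∫ ω, (κ ω : ℝ) ∂((r Set.univ)⁻¹ • r) with hCh
  have hCh0 : 0 ≤ Ch := integral_nonneg fun ω => Nat.cast_nonneg _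
  set CC : ℝ := c * Ch with hCC
  have hCC0 : 0 ≤ CC := mul_nonneg hc0.le hCh0
  set d : ℝ → ℝ := fun s => tvDist (μ s) (ν s) with hd
  have hd0 : ∀ s, 0 ≤ s → 0 ≤ d s := by
    intro s hs
    haveI := hμP s hs; haveI := hνP s hs
    exact tvDist_nonneg_s6 (μ s) (ν s)
  -- derivative of f_A
  have deriv_fA : ∀ (A : Set S), MeasurableSet A → ∀ s : ℝ, 0 ≤ s →
      HasDerivAt (fun u => (μ u A).toReal - (ν u A).toReal)
        (c * ((rdeT r γ κ (μ s) A).toReal - (μ s A).toReal)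
          - c * ((rdeT r γ κ (ν s) A).toReal - (ν s A).toReal)) s := by
    intro A hA s hs
    have hφm : Measurable (A.indicator (1 : S → ℝ)) := measurable_one.indicator hA
    have hφb : ∃ C, ∀ x, |A.indicator (1 : S → ℝ) x| ≤ C :=
      ⟨1, fun x => by by_cases hx : x ∈ A <;> simp [Set.indicator, hx]⟩
    have h1 := hμD _ hφm hφb s hs
    have h2 := hνD _ hφm hφb s hs
    have heq : ∀ m : Measure S, ∫ x, A.indicator (1 : S → ℝ) x ∂m = (m A).toReal :=
      fun m => integral_indicator_one hA
    simp_rw [heq] at h1 h2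
    exact h1.sub h2
  -- derivative of H_A
  have deriv_HA : ∀ (A : Set S), MeasurableSet A → ∀ s : ℝ, 0 ≤ s →
      HasDerivAt (fun u => Real.exp (c * u) * ((μ u A).toReal - (ν u A).toReal))
        (Real.exp (c * s) * c
          * ((rdeT r γ κ (μ s) A).toReal - (rdeT r γ κ (ν s) A).toReal)) s := by
    intro A hA s hs
    have hE : HasDerivAt (fun u : ℝ => Real.exp (c * u)) (Real.exp (c * s) * c) s := by
      have h := ((hasDerivAt_id s).const_mul c).exp
      simpa using h
    have h : HasDerivAt (fun u => Real.exp (c * u) * ((μ u A).toReal - (ν u A).toReal)) _ s :=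
      hE.mul (deriv_fA A hA s hs)
    convert h using 1
    ring
  -- bounds
  have habs_fA : ∀ s : ℝ, 0 ≤ s → ∀ (A : Set S), MeasurableSet A →
      |(μ s A).toReal - (ν s A).toReal| ≤ d s := by
    intro s hs A hA
    haveI := hμP s hs; haveI := hνP s hs
    exact abs_le_tvDist (μ s) (ν s) hA
  have hT_bound : ∀ s : ℝ, 0 ≤ s → ∀ (A : Set S), MeasurableSet A →
      |(rdeT r γ κ (μ s) A).toReal - (rdeT r γ κ (ν s) A).toReal| ≤ Ch * d s := by
    intro s hs A hA
    haveI := hμP s hs; haveI := hνP s hs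
    have h1 := rdeT_toReal_le hγ hκ r hr hmom (μ s) (ν s) hA
    have h2 := rdeT_toReal_le hγ hκ r hr hmom (ν s) (μ s) hA
    rw [tvDist_comm (ν s) (μ s)] at h2
    rw [← hCh] at h1 h2
    have hds : d s = tvDist (μ s) (ν s) := rfl
    rw [abs_sub_le_iff, hds]
    exact ⟨by linarith, by linarith⟩
  have hmeas01 : ∀ s : ℝ, 0 ≤ s → ∀ (A : Set S),
      (μ s A).toReal ≤ 1 ∧ (ν s A).toReal ≤ 1 := by
    intro s hs A
    haveI := hμP s hs; haveI := hνP s hs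
    constructor <;>
      · simpa using ENNReal.toReal_mono (by simp) (prob_le_one)
  have hDbound : ∀ s : ℝ, 0 ≤ s → ∀ (A : Set S), MeasurableSet A →
      |c * ((rdeT r γ κ (μ s) A).toReal - (μ s A).toReal)
        - c * ((rdeT r γ κ (ν s) A).toReal - (ν s A).toReal)| ≤ 4 * c := by
    intro s hs A hA
    haveI := hμP s hs; haveI := hνP s hs
    have h1 := rdeT_toReal_le_one hγ hκ r hr (μ s) hA
    have h2 := rdeT_toReal_le_one hγ hκ r hr (ν s) hA
    have h3 := (hmeas01 s hs A).1
    have h4 := (hmeas01 s hs A).2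
    have h5 : (0:ℝ) ≤ (rdeT r γ κ (μ s) A).toReal := ENNReal.toReal_nonneg
    have h6 : (0:ℝ) ≤ (rdeT r γ κ (ν s) A).toReal := ENNReal.toReal_nonneg
    have h7 : (0:ℝ) ≤ (μ s A).toReal := ENNReal.toReal_nonneg
    have h8 : (0:ℝ) ≤ (ν s A).toReal := ENNReal.toReal_nonneg
    rw [abs_le]
    constructor <;> nlinarith
  -- Lipschitz bound for f_A and d
  have hfA_lip : ∀ s1 s2 : ℝ, 0 ≤ s1 → s1 ≤ s2 → ∀ (A : Set S), MeasurableSet A →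
      |((μ s2 A).toReal - (ν s2 A).toReal) - ((μ s1 A).toReal - (ν s1 A).toReal)|
        ≤ 4 * c * (s2 - s1) := by
    intro s1 s2 h0 h12 A hA
    have hmvt := norm_image_sub_le_of_norm_deriv_le_segment'
      (f := fun u => (μ u A).toReal - (ν u A).toReal)
      (f' := fun s => c * ((rdeT r γ κ (μ s) A).toReal - (μ s A).toReal)
        - c * ((rdeT r γ κ (ν s) A).toReal - (ν s A).toReal))
      (a := s1) (b := s2) (C := 4 * c)
      (fun x hx => (deriv_fA A hA x (le_trans h0 hx.1)).hasDerivWithinAt)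
      (fun x hx => by simpa [Real.norm_eq_abs] using hDbound x (le_trans h0 hx.1) A hA)
      s2 (Set.right_mem_Icc.mpr h12)
    simpa [Real.norm_eq_abs] using hmvt
  have hd_lip : ∀ s1 s2 : ℝ, 0 ≤ s1 → s1 ≤ s2 → |d s2 - d s1| ≤ 4 * c * (s2 - s1) := by
    intro s1 s2 h0 h12
    have h0' : (0:ℝ) ≤ s2 := le_trans h0 h12
    haveI := hμP s1 h0; haveI := hνP s1 h0
    haveI := hμP s2 h0'; haveI := hνP s2 h0'
    have key : ∀ u v : ℝ, 0 ≤ u → 0 ≤ v →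
        (∀ (A : Set S), MeasurableSet A →
          |((μ u A).toReal - (ν u A).toReal) - ((μ v A).toReal - (ν v A).toReal)|
            ≤ 4 * c * (s2 - s1)) → d u ≤ d v + 4 * c * (s2 - s1) := by
      intro u v hu hv hAll
      haveI := hμP u hu; haveI := hνP u hu
      haveI := hμP v hv; haveI := hνP v hv
      apply csSup_le (tvSet_nonempty (μ u) (ν u))
      rintro x ⟨A, hA, rfl⟩
      have h1 := hAll A hA
      have h2 := abs_le_tvDist (μ v) (ν v) hA
      have h3 := abs_sub_abs_le_abs_sub ((μ u A).toReal - (ν u A).toReal)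
        ((μ v A).toReal - (ν v A).toReal)
      rw [hd]
      linarith
    have k1 : d s2 ≤ d s1 + 4 * c * (s2 - s1) :=
      key s2 s1 h0' h0 fun A hA => hfA_lip s1 s2 h0 h12 A hA
    have k2 : d s1 ≤ d s2 + 4 * c * (s2 - s1) :=
      key s1 s2 h0 h0' fun A hA => by
        rw [abs_sub_comm]; exact hfA_lip s1 s2 h0 h12 A hA
    rw [abs_sub_le_iff]
    exact ⟨by linarith, by linarith⟩
  have hd_cont : ContinuousOn d (Set.Ici 0) := by
    have hlip : LipschitzOnWith (Real.toNNReal (4 * c)) d (Set.Ici 0) := by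
      apply LipschitzOnWith.of_dist_le_mul
      intro x hx y hy
      rcases le_total x y with h | h
      · rw [Real.dist_eq, Real.dist_eq, abs_sub_comm (x:ℝ) y, abs_of_nonneg (by linarith : (0:ℝ) ≤ y - x)]
        calc |d x - d y| = |d y - d x| := abs_sub_comm _ _
          _ ≤ 4 * c * (y - x) := hd_lip x y hx h
          _ = Real.toNNReal (4 * c) * (y - x) := by
              rw [Real.coe_toNNReal _ (by positivity)]
      · rw [Real.dist_eq, Real.dist_eq, abs_of_nonneg (by linarith : (0:ℝ) ≤ x - y)]
        calc |d x - d y| ≤ 4 * c * (x - y) := hd_lip y x hy h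
          _ = Real.toNNReal (4 * c) * (x - y) := by
              rw [Real.coe_toNNReal _ (by positivity)]
    exact hlip.continuousOn
  set G : ℝ → ℝ := fun s => Real.exp (c * s) * d s with hG
  have hGc : ContinuousOn G (Set.Icc 0 t) := by
    apply ContinuousOn.mul
    · exact (Real.continuous_exp.comp (continuous_const.mul continuous_id)).continuousOn
    · exact hd_cont.mono (fun x hx => hx.1)
  have hG0 : ∀ s ∈ Set.Icc (0:ℝ) t, 0 ≤ G s := fun s hs =>
    mul_nonneg (Real.exp_pos _).le (hd0 s hs.1)
  -- key slope estimate
  have hkey : ∀ x z : ℝ, 0 ≤ x → x < z → z ≤ t →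
      G z ≤ G x + (z - x) * (CC * sSup (G '' Set.Icc x z)) := by
    intro x z hx hxz hzt
    set M := sSup (G '' Set.Icc x z) with hM
    have hsubset : Set.Icc x z ⊆ Set.Icc 0 t := Set.Icc_subset_Icc hx hzt
    have hbdd : BddAbove (G '' Set.Icc x z) :=
      (isCompact_Icc.image_of_continuousOn (hGc.mono hsubset)).bddAbove
    have hGM : ∀ s ∈ Set.Icc x z, G s ≤ M := fun s hs =>
      le_csSup hbdd (Set.mem_image_of_mem _ hs)
    have hMx : G x ≤ M := hGM x (Set.left_mem_Icc.mpr hxz.le)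
    have hM0 : 0 ≤ M := le_trans (hG0 x ⟨hx, le_trans hxz.le hzt⟩) hMx
    have hz0 : (0:ℝ) ≤ z := le_trans hx hxz.le
    haveI := hμP z hz0; haveI := hνP z hz0
    haveI := hμP x hx; haveI := hνP x hx
    have hAz : ∀ (A : Set S), MeasurableSet A →
        Real.exp (c * z) * |(μ z A).toReal - (ν z A).toReal|
          ≤ G x + (z - x) * (CC * M) := by
      intro A hA
      have hmvt := norm_image_sub_le_of_norm_deriv_le_segment'
        (f := fun u => Real.exp (c * u) * ((μ u A).toReal - (ν u A).toReal))
        (f' := fun s => Real.exp (c * s) * c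
          * ((rdeT r γ κ (μ s) A).toReal - (rdeT r γ κ (ν s) A).toReal))
        (a := x) (b := z) (C := CC * M)
        (fun s hs => (deriv_HA A hA s (le_trans hx hs.1)).hasDerivWithinAt)
        (fun s hs => ?_) z (Set.right_mem_Icc.mpr hxz.le)
      swap
      · -- bound on the derivative
        have hs0 : (0:ℝ) ≤ s := le_trans hx hs.1
        have hTb := hT_bound s hs0 A hA
        have hGs : G s ≤ M := hGM s (Set.mem_Icc.mpr ⟨hs.1, hs.2.le⟩)
        have hds0 : 0 ≤ d s := hd0 s hs0
        have hexp : (0:ℝ) < Real.exp (c * s) := Real.exp_pos _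
        calc ‖Real.exp (c * s) * c
              * ((rdeT r γ κ (μ s) A).toReal - (rdeT r γ κ (ν s) A).toReal)‖
            = Real.exp (c * s) * c
              * |(rdeT r γ κ (μ s) A).toReal - (rdeT r γ κ (ν s) A).toReal| := by
              rw [Real.norm_eq_abs, abs_mul, abs_of_nonneg (by positivity : (0:ℝ) ≤ Real.exp (c*s) * c)]
          _ ≤ Real.exp (c * s) * c * (Ch * d s) := by
              apply mul_le_mul_of_nonneg_left hTb (by positivity)
          _ = CC * G s := by rw [hG, hCC]; ring
          _ ≤ CC * M := mul_le_mul_of_nonneg_left hGs hCC0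
      · -- combine
        have h1 : |Real.exp (c * z) * ((μ z A).toReal - (ν z A).toReal)
            - Real.exp (c * x) * ((μ x A).toReal - (ν x A).toReal)| ≤ CC * M * (z - x) := by
          simpa [Real.norm_eq_abs] using hmvt
        have h2 : Real.exp (c * x) * |(μ x A).toReal - (ν x A).toReal| ≤ G x := by
          rw [hG]
          exact mul_le_mul_of_nonneg_left (habs_fA x hx A hA) (Real.exp_pos _).le
        have h3 : |Real.exp (c * z) * ((μ z A).toReal - (ν z A).toReal)|
            - |Real.exp (c * x) * ((μ x A).toReal - (ν x A).toReal)|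
            ≤ CC * M * (z - x) :=
          le_trans (abs_sub_abs_le_abs_sub _ _) h1
        have h4 : |Real.exp (c * z) * ((μ z A).toReal - (ν z A).toReal)|
            = Real.exp (c * z) * |(μ z A).toReal - (ν z A).toReal| := by
          rw [abs_mul, abs_of_nonneg (Real.exp_pos _).le]
        have h5 : |Real.exp (c * x) * ((μ x A).toReal - (ν x A).toReal)|
            = Real.exp (c * x) * |(μ x A).toReal - (ν x A).toReal| := by
          rw [abs_mul, abs_of_nonneg (Real.exp_pos _).le]
        rw [h4, h5] at h3
        nlinarith
    have hdz : d z ≤ (G x + (z - x) * (CC * M)) / Real.exp (c * z) := by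
      apply csSup_le (tvSet_nonempty (μ z) (ν z))
      rintro y ⟨A, hA, rfl⟩
      rw [le_div_iff₀ (Real.exp_pos _)]
      have := hAz A hA
      nlinarith [abs_nonneg ((μ z A).toReal - (ν z A).toReal)]
    calc G z = Real.exp (c * z) * d z := rfl
      _ ≤ Real.exp (c * z) * ((G x + (z - x) * (CC * M)) / Real.exp (c * z)) :=
          mul_le_mul_of_nonneg_left hdz (Real.exp_pos _).le
      _ = G x + (z - x) * (CC * M) := by
          field_simp
  -- slope condition for Gronwall
  have hslope : ∀ x ∈ Set.Ico (0:ℝ) t, ∀ ρ : ℝ, CC * G x < ρ →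
      ∃ᶠ z in nhdsWithin x (Set.Ioi x), (z - x)⁻¹ * (G z - G x) < ρ := by
    intro x hx ρ hρ
    set ε' : ℝ := (ρ - CC * G x) / (CC + 1) with hε'
    have hε'0 : 0 < ε' := div_pos (by linarith) (by linarith)
    have hcw : ContinuousWithinAt G (Set.Icc 0 t) x := hGc x ⟨hx.1, hx.2.le⟩
    have hev : G ⁻¹' Set.Iio (G x + ε') ∈ nhdsWithin x (Set.Icc 0 t) :=
      hcw (Iio_mem_nhds (by linarith))
    obtain ⟨U, hUo, hxU, hUsub⟩ := mem_nhdsWithin.mp hev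
    obtain ⟨δ, hδ0, hball⟩ := Metric.isOpen_iff.mp hUo x hxU
    have hxm : x < min (x + δ / 2) t := lt_min (by linarith) hx.2
    have hIoc : Set.Ioc x (min (x + δ / 2) t) ∈ nhdsWithin x (Set.Ioi x) :=
      Ioc_mem_nhdsGT hxm
    apply Filter.Eventually.frequently
    filter_upwards [hIoc] with z hz
    have hxz : x < z := hz.1
    have hzt : z ≤ t := le_trans hz.2 (min_le_right _ _)
    have hzδ : z - x ≤ δ / 2 := by
      have := hz.2
      have := min_le_left (x + δ / 2) t
      linarith [le_trans hz.2 (min_le_left (x + δ / 2) t)]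
    have hGlt : ∀ s ∈ Set.Icc x z, G s < G x + ε' := by
      intro s hs
      apply hUsub
      constructor
      · apply hball
        rw [Metric.mem_ball, Real.dist_eq, abs_of_nonneg (by linarith [hs.1] : (0:ℝ) ≤ s - x)]
        linarith [hs.2]
      · exact ⟨le_trans hx.1 hs.1, le_trans hs.2 hzt⟩
    have hMle : sSup (G '' Set.Icc x z) ≤ G x + ε' := by
      apply csSup_le
      · exact ⟨G x, Set.mem_image_of_mem _ (Set.left_mem_Icc.mpr hxz.le)⟩
      · rintro y ⟨s, hs, rfl⟩
        exact (hGlt s hs).le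
    have hkey' := hkey x z hx.1 hxz hzt
    have h1 : G z - G x ≤ (z - x) * (CC * (G x + ε')) := by
      have h2 : CC * sSup (G '' Set.Icc x z) ≤ CC * (G x + ε') :=
        mul_le_mul_of_nonneg_left hMle hCC0
      nlinarith
    have h2 : CC * (G x + ε') < ρ := by
      have h3 : (CC + 1) * ε' = ρ - CC * G x := by
        rw [hε']
        field_simp
      nlinarith
    calc (z - x)⁻¹ * (G z - G x) ≤ (z - x)⁻¹ * ((z - x) * (CC * (G x + ε'))) := by
          exact mul_le_mul_of_nonneg_left h1 (inv_nonneg.mpr (by linarith))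
      _ = CC * (G x + ε') := by
          rw [← mul_assoc, inv_mul_cancel₀ (by linarith : z - x ≠ 0), one_mul]
      _ < ρ := h2
  -- Gronwall
  have hgron := le_gronwallBound_of_liminf_deriv_right_le
    (f := G) (f' := fun x => CC * G x) (δ := G 0) (K := CC) (ε := 0) (a := 0) (b := t)
    hGc hslope le_rfl (fun x _ => by simp)
  have hGt := hgron t ⟨ht, le_rfl⟩
  rw [gronwallBound_ε0, sub_zero] at hGt
  -- identify the constant
  have hKval : ∫ ω, ((κ ω : ℝ) - 1) ∂r = CC - c := by
    rw [integral_sub hmom (integrable_const 1), integral_const, smul_eq_mul, mul_one, hCC, hCh,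
      integral_smul_measure, smul_eq_mul, ENNReal.toReal_inv, ← hc]
    have : c * (c⁻¹ * ∫ ω, (κ ω : ℝ) ∂r) = ∫ ω, (κ ω : ℝ) ∂r := by
      field_simp
    rw [this]
    rfl
  rw [hKval]
  -- finish
  have hG0eq : G 0 = d 0 := by
    rw [hG]
    simp
  rw [hG0eq] at hGt
  have hGteq : G t = Real.exp (c * t) * d t := rfl
  rw [hGteq] at hGt
  have hfinal : d t ≤ Real.exp ((CC - c) * t) * d 0 := by
    rw [show (CC - c) * t = CC * t - c * t by ring, Real.exp_sub, div_mul_eq_mul_div,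
      le_div_iff₀ (Real.exp_pos _)]
    nlinarith [Real.exp_pos (c * t), Real.exp_pos (CC * t), hd0 0 le_rfl]
  exact hfinal
end
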